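/- Let (l_j)_{j≥1} be a nonincreasing infinite sequence of positive real numbers with ∑_{j=1}^∞ l_j < ∞, let V_L(ε) = ∑_{j : l_j ≥ 2ε} 2ε + ∑_{j : l_j < 2ε} l_j, and let N(x) = #{ j : l_j ≥ 1/x }. Define σ = inf{ α ∈ ℝ : ∑_j l_j^α < ∞ }, D_M = inf{ α ≥ 0 : V_L(ε) = O(ε^{1−α}) as ε → 0⁺ }, and D = inf{ α ≥ 0 : N(x) = O(x^α) as x → ∞ }. Then 0 ≤ σ ≤ 1 and D_M = σ = D. -/

import Mathlib

open Real Filter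
open Real Filter

lemma fs_finite {l : ℕ → ℝ} (hsum : Summable l) {c : ℝ} (hc : 0 < c) :
    {j : ℕ | c ≤ l j}.Finite := by
  have h := hsum.tendsto_atTop_zero.eventually_lt_const hc
  obtain ⟨n, hn⟩ := eventually_atTop.1 h
  apply Set.Finite.subset (Set.finite_Iio n)
  intro j hj
  by_contra hlt
  simp only [Set.mem_Iio, not_lt] at hlt
  exact absurd hj (not_le.2 (hn j hlt))

lemma fs_card_lower {l : ℕ → ℝ} (hsum : Summable l) (hmono : Antitone l) {c : ℝ} (hc : 0 < c)
    {n : ℕ} (h : c ≤ l n) : n + 1 ≤ Nat.card {j : ℕ | c ≤ l j} := by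
  have hfin := fs_finite hsum hc
  rw [Nat.card_coe_set_eq, Set.ncard_eq_toFinset_card _ hfin]
  have hsub : Finset.range (n+1) ⊆ hfin.toFinset := by
    intro j hj
    simp only [Finset.mem_range, Nat.lt_succ_iff] at hj
    simp only [Set.Finite.mem_toFinset, Set.mem_setOf_eq]
    exact le_trans h (hmono hj)
  simpa using Finset.card_le_card hsub

lemma fs_card_upper {l : ℕ → ℝ} (hsum : Summable l) {c : ℝ} (hc : 0 < c) {m : ℕ}
    (h : ∀ j, c ≤ l j → j < m) : Nat.card {j : ℕ | c ≤ l j} ≤ m := by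
  have hfin := fs_finite hsum hc
  rw [Nat.card_coe_set_eq, Set.ncard_eq_toFinset_card _ hfin]
  have hsub : hfin.toFinset ⊆ Finset.range m := by
    intro j hj
    simp only [Set.Finite.mem_toFinset, Set.mem_setOf_eq] at hj
    exact Finset.mem_range.2 (h j hj)
  simpa using Finset.card_le_card hsub

lemma fs_sum_lb {l : ℕ → ℝ} (hpos : ∀ j, 0 < l j) (hmono : Antitone l) (hsum : Summable l)
    (n : ℕ) : (n + 1 : ℝ) * l n ≤ ∑' j, l j := by
  have h1 : (n + 1 : ℝ) * l n = ∑ i ∈ Finset.range (n+1), l n := by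
    rw [Finset.sum_const, Finset.card_range]; ring
  rw [h1]
  refine le_trans (Finset.sum_le_sum fun i hi => ?_) (Summable.sum_le_tsum _ (fun i _ => (hpos i).le) hsum)
  exact hmono (Nat.lt_succ_iff.1 (Finset.mem_range.1 hi))


lemma fs_S_upclosed {l : ℕ → ℝ} (hpos : ∀ j, 0 < l j) (hsum : Summable l) {α β : ℝ}
    (hαβ : α ≤ β) (hα : Summable fun j => l j ^ α) : Summable fun j => l j ^ β := by
  obtain ⟨n, hn⟩ := eventually_atTop.1 (hsum.tendsto_atTop_zero.eventually_le_const (by norm_num : (0:ℝ) < 1))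
  rw [← summable_nat_add_iff n]
  refine Summable.of_nonneg_of_le (fun j => rpow_nonneg (hpos _).le _) (fun j => ?_)
    ((summable_nat_add_iff n).2 hα)
  exact rpow_le_rpow_of_exponent_ge (hpos _) (hn (j+n) (Nat.le_add_left _ _)) hαβ

lemma fs_S_pos {l : ℕ → ℝ} (hpos : ∀ j, 0 < l j) (hsum : Summable l) {α : ℝ}
    (hα : Summable fun j => l j ^ α) : 0 < α := by
  by_contra h
  push_neg at h
  obtain ⟨n, hn⟩ := eventually_atTop.1 (hsum.tendsto_atTop_zero.eventually_lt_const (by norm_num : (0:ℝ) < 1))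
  have hbig : ∀ j ≥ n, (1:ℝ) ≤ l j ^ α := by
    intro j hj
    calc (1:ℝ) = l j ^ (0:ℝ) := (rpow_zero _).symm
    _ ≤ l j ^ α := rpow_le_rpow_of_exponent_ge (hpos j) (hn j hj).le h
  have := hα.tendsto_atTop_zero.eventually_lt_const (by norm_num : (0:ℝ) < 1)
  obtain ⟨m, hm⟩ := eventually_atTop.1 this
  have h1 := hbig (max n m) (le_max_left _ _)
  have h2 := hm (max n m) (le_max_right _ _)
  linarith

lemma fs_one_mem {l : ℕ → ℝ} (hsum : Summable l) : Summable fun j => l j ^ (1:ℝ) := by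
  simpa [rpow_one] using hsum

lemma fs_count_to_sum {l : ℕ → ℝ} (hpos : ∀ j, 0 < l j) (hmono : Antitone l) (hsum : Summable l)
    {α C x₀ : ℝ} (hα : 0 ≤ α) (hC : 0 < C) (hx₀ : 0 < x₀)
    (hb : ∀ x : ℝ, x₀ < x → (Nat.card {j : ℕ | 1/x ≤ l j} : ℝ) ≤ C * x ^ α)
    {β : ℝ} (hβ : α < β) : Summable fun j => l j ^ β := by
  obtain ⟨n₀, hn₀⟩ := eventually_atTop.1
    (hsum.tendsto_atTop_zero.eventually_lt_const (by positivity : (0:ℝ) < 1/x₀))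
  have key : ∀ n, n₀ ≤ n → (n + 1 : ℝ) ≤ C * ((l n)⁻¹) ^ α := by
    intro n hn
    have hl := hpos n
    have hxn : x₀ < (l n)⁻¹ := by
      have h2 : x₀ * l n < x₀ * (1/x₀) := mul_lt_mul_of_pos_left (hn₀ n hn) hx₀
      rw [mul_one_div_cancel hx₀.ne'] at h2
      have h3 : x₀ * l n < (l n)⁻¹ * l n := by rw [inv_mul_cancel₀ hl.ne']; exact h2
      exact lt_of_mul_lt_mul_right h3 hl.le
    have hcard := hb _ hxn
    have hone : (1:ℝ) / (l n)⁻¹ = l n := by field_simp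
    rw [hone] at hcard
    have hlow := fs_card_lower hsum hmono hl (le_refl (l n))
    calc (n + 1 : ℝ) ≤ (Nat.card {j : ℕ | l n ≤ l j} : ℝ) := by exact_mod_cast hlow
      _ ≤ C * ((l n)⁻¹) ^ α := hcard
  rcases eq_or_lt_of_le hα with h0 | hα'
  · -- α = 0 : contradiction
    exfalso
    set n := max n₀ ⌈C⌉₊ with hn
    have h1 := key n (le_max_left _ _)
    rw [← h0, rpow_zero, mul_one] at h1
    have h2 : C ≤ (⌈C⌉₊ : ℝ) := Nat.le_ceil C
    have h3 : (⌈C⌉₊ : ℝ) ≤ (n : ℝ) := by exact_mod_cast le_max_right n₀ ⌈C⌉₊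
    linarith
  · set p := β / α with hp
    have hp1 : 1 < p := (one_lt_div hα').2 hβ
    have hp0 : 0 ≤ p := by linarith
    have hpow : ∀ n, n₀ ≤ n → l n ^ β ≤ C ^ p / ((n:ℝ) + 1) ^ p := by
      intro n hn
      have hl := hpos n
      have h1 := key n hn
      rw [inv_rpow hl.le] at h1
      have h2 : l n ^ α ≤ C / ((n:ℝ) + 1) := by
        rw [le_div_iff₀ (by positivity)]
        have h3 : ((n:ℝ) + 1) * (l n ^ α) ≤ (C * (l n ^ α)⁻¹) * (l n ^ α) :=
          mul_le_mul_of_nonneg_right h1 (rpow_nonneg hl.le _)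
        rw [mul_assoc, inv_mul_cancel₀ (rpow_pos_of_pos hl _).ne', mul_one] at h3
        rw [mul_comm]; exact h3
      have h4 : l n ^ β = (l n ^ α) ^ p := by
        rw [← rpow_mul hl.le]
        rw [hp, mul_comm, div_mul_cancel₀ _ hα'.ne']
      rw [h4, ← div_rpow hC.le (by positivity)]
      exact rpow_le_rpow (rpow_nonneg hl.le _) h2 hp0
    -- summable majorant
    have hmaj : Summable (fun n : ℕ => C ^ p / ((n:ℝ) + 1) ^ p) := by
      have h1 : Summable (fun n : ℕ => 1 / ((n:ℝ)) ^ p) := (summable_one_div_nat_rpow).2 hp1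
      have h2 := (summable_nat_add_iff 1).2 h1
      have h3 : Summable (fun n : ℕ => 1 / ((n:ℝ) + 1) ^ p) := by
        refine h2.congr fun n => ?_
        push_cast
        ring_nf
      simpa [div_eq_mul_inv, mul_comm] using h3.mul_left (C ^ p)
    rw [← summable_nat_add_iff n₀]
    refine Summable.of_nonneg_of_le (fun j => rpow_nonneg (hpos _).le _) (fun j => ?_) hmaj
    calc l (j + n₀) ^ β ≤ C ^ p / (((j + n₀ : ℕ):ℝ) + 1) ^ p :=
        hpow _ (Nat.le_add_left _ _)
      _ ≤ C ^ p / ((j:ℝ) + 1) ^ p := by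
        have hle : ((j:ℝ) + 1) ^ p ≤ (((j + n₀ : ℕ):ℝ) + 1) ^ p :=
          rpow_le_rpow (by positivity) (by push_cast; linarith [Nat.cast_nonneg (α := ℝ) n₀]) hp0
        gcongr

lemma fs_V_le {l : ℕ → ℝ} (hpos : ∀ j, 0 < l j) (hsum : Summable l)
    {β : ℝ} (hβ0 : 0 ≤ β) (hβ1 : β ≤ 1) (hβS : Summable fun j => l j ^ β)
    {ε : ℝ} (hε : 0 < ε) :
    2 * ε * (Nat.card {j : ℕ | 2 * ε ≤ l j} : ℝ) + (∑' j : {j : ℕ // l j < 2 * ε}, l j.1)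
      ≤ (2:ℝ) ^ (1-β) * (∑' j, l j ^ β) * ε ^ (1-β) := by
  set A := {j : ℕ | 2 * ε ≤ l j} with hA
  have h2ε : (0:ℝ) < 2 * ε := by linarith
  have hfin : A.Finite := fs_finite hsum h2ε
  set g := fun j => (2*ε) ^ (1-β) * l j ^ β with hg
  have hgS : Summable g := hβS.mul_left _
  have hAc : Aᶜ = {j : ℕ | l j < 2 * ε} := by ext j; simp [hA, not_le]
  -- part 1
  have part1 : 2 * ε * (Nat.card A : ℝ) ≤ ∑ j ∈ hfin.toFinset, g j := by
    have hcard : (Nat.card A : ℝ) = (hfin.toFinset.card : ℝ) := by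
      rw [Nat.card_coe_set_eq, Set.ncard_eq_toFinset_card _ hfin]
    rw [hcard]
    have : 2 * ε * (hfin.toFinset.card : ℝ) = ∑ _j ∈ hfin.toFinset, (2*ε) := by
      rw [Finset.sum_const, nsmul_eq_mul, mul_comm]
    rw [this]
    refine Finset.sum_le_sum fun j hj => ?_
    have hjA : 2 * ε ≤ l j := by
      have := (Set.Finite.mem_toFinset hfin).1 hj; exact this
    calc 2 * ε = (2*ε) ^ ((1-β) + β) := by rw [sub_add_cancel, rpow_one]
      _ = (2*ε) ^ (1-β) * (2*ε) ^ β := rpow_add h2ε _ _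
      _ ≤ g j := by
          refine mul_le_mul_of_nonneg_left ?_ (rpow_nonneg h2ε.le _)
          exact rpow_le_rpow h2ε.le hjA hβ0
  -- part 2
  have part2 : (∑' j : {j : ℕ // l j < 2 * ε}, l j.1) ≤ ∑' j : ↥(Aᶜ), g j.1 := by
    have he : (∑' j : {j : ℕ // l j < 2 * ε}, l j.1) = ∑' j : ↥(Aᶜ), l j.1 := by
      rw [hAc]; rfl
    rw [he]
    refine Summable.tsum_le_tsum (fun j => ?_) (hsum.subtype _) (hgS.subtype _)
    have hjc : l j.1 < 2 * ε := not_le.1 j.2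
    have hl := hpos j.1
    calc l j.1 = l j.1 ^ ((1-β) + β) := by rw [sub_add_cancel, rpow_one]
      _ = l j.1 ^ (1-β) * l j.1 ^ β := rpow_add hl _ _
      _ ≤ g j.1 := by
          refine mul_le_mul_of_nonneg_right ?_ (rpow_nonneg hl.le _)
          exact rpow_le_rpow hl.le hjc.le (by linarith)
  -- combine
  have hsplit : (∑ j ∈ hfin.toFinset, g j) + (∑' j : ↥(Aᶜ), g j.1) = ∑' j, g j := by
    have h1 : (∑' j : ↥A, g j.1) = ∑ j ∈ hfin.toFinset, g j := by
      have h2 := Finset.tsum_subtype' hfin.toFinset g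
      rwa [hfin.coe_toFinset] at h2
    rw [← h1]
    exact Summable.tsum_add_tsum_compl (hgS.subtype _) (hgS.subtype _)
  have htot : ∑' j, g j = (2*ε) ^ (1-β) * ∑' j, l j ^ β := tsum_mul_left
  have hfinal : (2*ε) ^ (1-β) * (∑' j, l j ^ β) = (2:ℝ) ^ (1-β) * (∑' j, l j ^ β) * ε ^ (1-β) := by
    rw [mul_rpow (by norm_num) hε.le]; ring
  linarith [part1, part2, hsplit.symm ▸ (le_refl (∑' j, g j)), htot, hfinal]


/-- For a real fractal string with infinitely many lengths `(l_j)`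
(nonincreasing, positive, summable), inner tube volume
`V_L(ε) = ∑_{l_j ≥ 2ε} 2ε + ∑_{l_j < 2ε} l_j`, counting function `N(x) = #{j : l_j ≥ 1/x}`,
abscissa of convergence `σ`, Minkowski dimension `D_M` and growth rate `D`, one has
`0 ≤ σ ≤ 1` and `D_M = σ = D`. -/
theorem real_string_minkowski_eq_abscissa_eq_growth (l : ℕ → ℝ) (hpos : ∀ j, 0 < l j)
    (hmono : Antitone l) (hsum : Summable l)
    (V : ℝ → ℝ)
    (hV : ∀ ε : ℝ, 0 < ε →
      V ε = 2 * ε * (Nat.card {j : ℕ | 2 * ε ≤ l j} : ℝ)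
        + ∑' j : {j : ℕ // l j < 2 * ε}, l j.1)
    (N : ℝ → ℝ) (hN : ∀ x : ℝ, 0 < x → N x = Nat.card {j : ℕ | 1 / x ≤ l j})
    (σ DM D : ℝ)
    (hσ : σ = sInf {α : ℝ | Summable fun j => l j ^ α})
    (hDM : DM = sInf {α : ℝ | 0 ≤ α ∧
        ∃ C > (0 : ℝ), ∃ ε₀ > (0 : ℝ), ∀ ε : ℝ, 0 < ε → ε < ε₀ → V ε ≤ C * ε ^ (1 - α)})
    (hD : D = sInf {α : ℝ | 0 ≤ α ∧
        ∃ C > (0 : ℝ), ∃ x₀ > (0 : ℝ), ∀ x : ℝ, x₀ < x → N x ≤ C * x ^ α}) :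
    0 ≤ σ ∧ σ ≤ 1 ∧ DM = σ ∧ σ = D := by
  subst hσ hDM hD
  set S := {α : ℝ | Summable fun j => l j ^ α} with hS
  set SDM := {α : ℝ | 0 ≤ α ∧
      ∃ C > (0 : ℝ), ∃ ε₀ > (0 : ℝ), ∀ ε : ℝ, 0 < ε → ε < ε₀ → V ε ≤ C * ε ^ (1 - α)} with hSDM
  set SD := {α : ℝ | 0 ≤ α ∧
      ∃ C > (0 : ℝ), ∃ x₀ > (0 : ℝ), ∀ x : ℝ, x₀ < x → N x ≤ C * x ^ α} with hSD
  have hS1 : (1:ℝ) ∈ S := fs_one_mem hsum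
  have hSbdd : BddBelow S := ⟨0, fun α h => (fs_S_pos hpos hsum h).le⟩
  have hσ0 : 0 ≤ sInf S := le_csInf ⟨1, hS1⟩ (fun α h => (fs_S_pos hpos hsum h).le)
  have hσ1 : sInf S ≤ 1 := csInf_le hSbdd hS1
  -- membership in SDM for summable exponents in [0,1]
  have hmemDM : ∀ β : ℝ, 0 ≤ β → β ≤ 1 → (Summable fun j => l j ^ β) → β ∈ SDM := by
    intro β hβ0 hβ1 hβS
    have hT : 0 < ∑' j, l j ^ β :=
      Summable.tsum_pos hβS (fun j => rpow_nonneg (hpos j).le _) 0 (rpow_pos_of_pos (hpos 0) _)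
    refine ⟨hβ0, (2:ℝ) ^ (1-β) * ∑' j, l j ^ β, by positivity, 1, one_pos, fun ε hε _ => ?_⟩
    rw [hV ε hε]
    exact fs_V_le hpos hsum hβ0 hβ1 hβS hε
  have hDM1 : (1:ℝ) ∈ SDM := hmemDM 1 zero_le_one le_rfl hS1
  have hSDbdd : BddBelow SD := ⟨0, fun α hα => hα.1⟩
  have hSDMbdd : BddBelow SDM := ⟨0, fun α hα => hα.1⟩
  -- SDM ⊆ SD
  have hsub : SDM ⊆ SD := by
    rintro α ⟨hα0, C, hC, ε₀, hε₀, hb⟩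
    refine ⟨hα0, C * 2 ^ α / 2, by positivity, 1/(2*ε₀), by positivity, fun x hx => ?_⟩
    have hx0 : 0 < x := lt_trans (by positivity) hx
    set ε := (2*x)⁻¹ with hεdef
    have hε : 0 < ε := by positivity
    have hεε₀ : ε < ε₀ := by
      rw [hεdef, inv_lt_comm₀ (by positivity) hε₀]
      calc ε₀⁻¹ = 2 * (1/(2*ε₀)) := by field_simp
        _ < 2 * x := by linarith
    have h2ε : 2 * ε = 1 / x := by rw [hεdef]; field_simp
    have hset : {j : ℕ | 1/x ≤ l j} = {j : ℕ | 2 * ε ≤ l j} := by rw [h2ε]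
    have htail : 0 ≤ ∑' j : {j : ℕ // l j < 2 * ε}, l j.1 :=
      tsum_nonneg fun j => (hpos j.1).le
    have hVb := hb ε hε hεε₀
    rw [hV ε hε] at hVb
    have hcount : 2 * ε * (Nat.card {j : ℕ | 2 * ε ≤ l j} : ℝ) ≤ C * ε ^ (1-α) := by
      linarith
    set n : ℝ := (Nat.card {j : ℕ | 2 * ε ≤ l j} : ℝ) with hn
    have hn' : n ≤ C * 2 ^ α / 2 * x ^ α := by
      have hεinv : ε^(-α) = 2 ^ α * x ^ α := by
        rw [hεdef, inv_rpow (by positivity), ← rpow_neg (by positivity), neg_neg,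
          mul_rpow (by norm_num) hx0.le]
      have hsplit : ε ^ (1-α) = ε * ε^(-α) := by
        rw [show (1:ℝ) - α = 1 + -α by ring, rpow_add hε, rpow_one]
      have h3 : n * (2*ε) ≤ (C * 2 ^ α / 2 * x ^ α) * (2*ε) := by
        calc n * (2*ε) = 2 * ε * n := by ring
          _ ≤ C * ε ^ (1-α) := hcount
          _ = (C / 2 * ε^(-α)) * (2*ε) := by rw [hsplit]; ring
          _ = (C * 2 ^ α / 2 * x ^ α) * (2*ε) := by rw [hεinv]; ring
      exact le_of_mul_le_mul_right h3 (by positivity)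
    rw [hN x hx0, hset]
    exact hn'
  -- σ ≤ D
  have hσleD : sInf S ≤ sInf SD := by
    refine le_csInf ⟨1, hsub hDM1⟩ fun α hα => ?_
    obtain ⟨hα0, C, hC, x₀, hx₀, hb⟩ := hα
    refine le_of_forall_gt_imp_ge_of_dense fun β hβ => ?_
    refine csInf_le hSbdd (fs_count_to_sum hpos hmono hsum hα0 hC hx₀ (fun x hx => ?_) hβ)
    have hx0 : 0 < x := lt_trans hx₀ hx
    rw [← hN x hx0]
    exact hb x hx
  -- D ≤ DM
  have hDleDM : sInf SD ≤ sInf SDM := csInf_le_csInf hSDbdd ⟨1, hDM1⟩ hsub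
  -- DM ≤ σ
  have hDMleσ : sInf SDM ≤ sInf S := by
    refine le_of_forall_gt_imp_ge_of_dense fun β hβ => ?_
    rcases le_or_gt β 1 with hβ1 | hβ1
    · obtain ⟨γ, hγS, hγβ⟩ := exists_lt_of_csInf_lt ⟨1, hS1⟩ hβ
      exact csInf_le hSDMbdd
        (hmemDM β (le_trans hσ0 (le_of_lt hβ)) hβ1 (fs_S_upclosed hpos hsum hγβ.le hγS))
    · exact le_trans (csInf_le hSDMbdd hDM1) hβ1.le
  exact ⟨hσ0, hσ1, le_antisymm hDMleσ (hσleD.trans hDleDM),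
    le_antisymm hσleD (hDleDM.trans hDMleσ)⟩
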